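/- For the trigonometric polynomial f(t) = Σ_{j=1}^n A_j e^{iλ_j t} with A_j ≠ 0 and rationally independent λ_j, the supremum sup_{t∈ℝ} |Σ_{j=1}^n A_j e^{iλ_j t}(e^{ix_j} - e^{iy_j})| equals Σ_{j=1}^n |A_j| · |e^{ix_j} - e^{iy_j}| for any real x_j, y_j. -/

import Mathlib

open scoped BigOperators

open Filter intervalIntegral Complex

noncomputable def ee (r : ℝ) : ℂ := Complex.exp (Complex.I * r)

lemma ee_add (r s : ℝ) : ee (r + s) = ee r * ee s := by
  simp only [ee, ← Complex.exp_add]; congr 1; push_cast; ring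

lemma ee_zero : ee 0 = 1 := by simp [ee]

lemma norm_ee (r : ℝ) : ‖ee r‖ = 1 := by
  simp [ee, Complex.norm_exp, mul_comm]

lemma conj_ee (r : ℝ) : (starRingEnd ℂ) (ee r) = ee (-r) := by
  rw [ee, ee, ← Complex.exp_conj]
  congr 1
  simp

lemma continuous_ee : Continuous ee :=
  Complex.continuous_exp.comp (continuous_const.mul Complex.continuous_ofReal)

lemma ee_sum {α : Type*} (s : Finset α) (v : α → ℝ) :
    ee (∑ i ∈ s, v i) = ∏ i ∈ s, ee (v i) := by
  unfold ee
  rw [← Complex.exp_sum]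
  congr 1
  push_cast
  rw [Finset.mul_sum]

lemma tendsto_avg (μ : ℝ) :
    Tendsto (fun T : ℝ => (∫ t in (0:ℝ)..T, ee (μ * t)) / (T : ℂ)) atTop
      (nhds (if μ = 0 then 1 else 0)) := by
  by_cases h : μ = 0
  · simp only [h, if_pos rfl]
    have heq : ∀ᶠ T : ℝ in atTop, (1:ℂ) = (∫ t in (0:ℝ)..T, ee (μ * t)) / (T : ℂ) := by
      filter_upwards [eventually_ge_atTop (1:ℝ)] with T hT
      have hT0 : (T : ℂ) ≠ 0 := by exact_mod_cast (by linarith : T ≠ 0)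
      simp only [h, zero_mul, ee_zero, intervalIntegral.integral_const, sub_zero,
        real_smul, mul_one]
      rw [div_self hT0]
    refine Tendsto.congr' ?_ (tendsto_const_nhds : Tendsto (fun _ : ℝ => (1:ℂ)) atTop (nhds 1))
    filter_upwards [heq] with T hT
    rw [h] at hT
    exact hT
  · simp only [if_neg h]
    have hc : Complex.I * μ ≠ 0 := by
      simp [Complex.I_ne_zero, Complex.ofReal_ne_zero, h]
    have key : ∀ T : ℝ, (∫ t in (0:ℝ)..T, ee (μ * t)) =
        (Complex.exp (Complex.I * μ * T) - 1) / (Complex.I * μ) := by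
      intro T
      have h1 : ∀ t : ℝ, ee (μ * t) = Complex.exp ((Complex.I * μ) * t) := by
        intro t; unfold ee; push_cast; ring_nf
      simp only [h1]
      rw [integral_exp_mul_complex hc]
      simp
    have hbound : ∀ᶠ T : ℝ in atTop,
        ‖(∫ t in (0:ℝ)..T, ee (μ * t)) / (T : ℂ)‖ ≤ (2 / ‖Complex.I * (μ:ℂ)‖) / T := by
      filter_upwards [eventually_ge_atTop (1:ℝ)] with T hT
      rw [key, norm_div, norm_div]
      have h2 : ‖Complex.exp (Complex.I * ↑μ * ↑T) - 1‖ ≤ 2 := by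
        have h3 : ‖Complex.exp (Complex.I * ↑μ * ↑T)‖ = 1 := by
          rw [show Complex.I * ↑μ * ↑T = Complex.I * ((μ * T : ℝ) : ℂ) by push_cast; ring]
          exact norm_ee (μ * T)
        calc ‖Complex.exp (Complex.I * ↑μ * ↑T) - 1‖
            ≤ ‖Complex.exp (Complex.I * ↑μ * ↑T)‖ + ‖(1:ℂ)‖ := norm_sub_le _ _
          _ ≤ 2 := by rw [h3]; norm_num
      have hTn : ‖(T:ℂ)‖ = T := by
        simp [abs_of_pos (by linarith : (0:ℝ) < T)]
      rw [hTn]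
      gcongr
    have hzero : Tendsto (fun T : ℝ => (2 / ‖Complex.I * (μ:ℂ)‖) / T) atTop (nhds 0) :=
      tendsto_const_nhds.div_atTop tendsto_id
    exact squeeze_zero_norm' hbound hzero

lemma tendsto_avg_sum {ι : Type*} [Fintype ι] (coeff : ι → ℂ) (μ : ι → ℝ) :
    Tendsto (fun T : ℝ => (∫ t in (0:ℝ)..T, ∑ k, coeff k * ee (μ k * t)) / (T : ℂ)) atTop
      (nhds (∑ k, if μ k = 0 then coeff k else 0)) := by
  have hint : ∀ (k : ι) (T : ℝ), IntervalIntegrable (fun t => coeff k * ee (μ k * t))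
      MeasureTheory.volume 0 T := by
    intro k T
    exact (continuous_const.mul (continuous_ee.comp (continuous_const.mul continuous_id))).intervalIntegrable _ _
  have heq : ∀ T : ℝ, (∫ t in (0:ℝ)..T, ∑ k, coeff k * ee (μ k * t)) / (T : ℂ) =
      ∑ k, coeff k * ((∫ t in (0:ℝ)..T, ee (μ k * t)) / (T : ℂ)) := by
    intro T
    rw [intervalIntegral.integral_finset_sum (fun k _ => hint k T), Finset.sum_div]
    congr 1
    ext k
    rw [intervalIntegral.integral_const_mul, mul_div_assoc]
  simp only [heq]
  have := tendsto_finset_sum (Finset.univ : Finset ι)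
    (fun k _ => (tendsto_avg (μ k)).const_mul (coeff k))
  have hval : (∑ k, if μ k = 0 then coeff k else 0) = ∑ k, coeff k * (if μ k = 0 then (1:ℂ) else 0) := by
    apply Finset.sum_congr rfl
    intro k _
    by_cases hk : μ k = 0 <;> simp [hk]
  rw [hval]
  exact this

theorem sup_key (n : ℕ) (lam : Fin n → ℝ) (hlam : LinearIndependent ℚ lam) (B : Fin n → ℂ) :
    (⨆ t : ℝ, ‖∑ j, B j * ee (lam j * t)‖) = ∑ j, ‖B j‖ := by
  classical
  set S : ℝ := ∑ j, ‖B j‖ with hS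
  set f : ℝ → ℂ := fun t => ∑ j, B j * ee (lam j * t) with hf
  have hS0 : 0 ≤ S := Finset.sum_nonneg fun j _ => norm_nonneg _
  have hub : ∀ t, ‖f t‖ ≤ S := by
    intro t
    calc ‖f t‖ ≤ ∑ j, ‖B j * ee (lam j * t)‖ := norm_sum_le _ _
      _ = S := by simp only [norm_mul, norm_ee, mul_one, hS]
  have hbdd : BddAbove (Set.range fun t => ‖f t‖) := ⟨S, by rintro r ⟨t, rfl⟩; exact hub t⟩
  refine le_antisymm (ciSup_le hub) ?_
  set M : ℝ := ⨆ t, ‖f t‖ with hMdef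
  have hM : ∀ t, ‖f t‖ ≤ M := fun t => le_ciSup hbdd t
  have hM0 : 0 ≤ M := le_trans (norm_nonneg _) (hM 0)
  have hf_cont : Continuous f := by
    apply continuous_finset_sum
    intro j _
    exact continuous_const.mul (continuous_ee.comp (by fun_prop))
  -- key inequality
  have key : ∀ N : ℕ, 1 ≤ N → ((N:ℝ) - 1) * (N:ℝ)^(n-1) * S ≤ M * (N:ℝ)^n := by
    intro N hN
    set θ : Fin n → ℝ := fun j => (B j).arg with hθ
    have hBθ : ∀ j, B j * ee (-(θ j)) = ((‖B j‖ : ℝ) : ℂ) := by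
      intro j
      have h1 : ((‖B j‖ : ℝ) : ℂ) * ee (θ j) = B j := by
        rw [show ee (θ j) = Complex.exp ((θ j : ℂ) * Complex.I) by rw [ee]; ring_nf]
        exact Complex.norm_mul_exp_arg_mul_I (B j)
      calc B j * ee (-(θ j)) = (↑‖B j‖ * ee (θ j)) * ee (-(θ j)) := by rw [h1]
        _ = ↑‖B j‖ * ee (θ j + -(θ j)) := by rw [ee_add]; ring
        _ = ((‖B j‖ : ℝ) : ℂ) := by rw [show θ j + -θ j = 0 by ring, ee_zero, mul_one]
    set g : Fin n → ℝ → ℂ := fun i t => ∑ a : Fin N, ee ((a:ℝ) * (lam i * t + θ i)) with hg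
    set q : ℝ → ℝ := fun t => ∏ i, ‖g i t‖^2 with hqdef
    have hq0 : ∀ t, 0 ≤ q t := fun t => Finset.prod_nonneg fun i _ => sq_nonneg _
    have hg_cont : ∀ i, Continuous (g i) := by
      intro i
      apply continuous_finset_sum
      intro a _
      exact continuous_ee.comp (by fun_prop)
    have hq_cont : Continuous q := continuous_finset_prod _ fun i _ => ((hg_cont i).norm.pow 2)
    set cz : Fin N × Fin N → ℤ := fun ab => (ab.1 : ℤ) - (ab.2 : ℤ) with hcz
    set coeffP : (Fin n → Fin N × Fin N) → ℂ := fun d => ee (∑ i, (cz (d i) : ℝ) * θ i) with hcoeffP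
    set μP : (Fin n → Fin N × Fin N) → ℝ := fun d => ∑ i, (cz (d i) : ℝ) * lam i with hμP
    have harg : ∀ (d : Fin n → Fin N × Fin N) (t : ℝ),
        (∑ i, (cz (d i) : ℝ) * (lam i * t + θ i)) =
          (∑ i, (cz (d i) : ℝ) * θ i) + (∑ i, (cz (d i) : ℝ) * lam i) * t := by
      intro d t
      rw [Finset.sum_mul, ← Finset.sum_add_distrib]
      apply Finset.sum_congr rfl
      intro i _
      ring
    have hq_expand : ∀ t, ((q t : ℝ) : ℂ) = ∑ d : Fin n → Fin N × Fin N, coeffP d * ee (μP d * t) := by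
      intro t
      have hfac : ∀ i : Fin n, ((‖g i t‖^2 : ℝ) : ℂ) =
          ∑ ab : Fin N × Fin N, ee ((cz ab : ℝ) * (lam i * t + θ i)) := by
        intro i
        have h1 : ((‖g i t‖^2 : ℝ) : ℂ) = g i t * (starRingEnd ℂ) (g i t) := by
          rw [Complex.mul_conj, Complex.normSq_eq_norm_sq]
        rw [h1]
        have h2 : (starRingEnd ℂ) (g i t) = ∑ b : Fin N, ee (-((b:ℝ) * (lam i * t + θ i))) := by
          rw [hg]
          rw [map_sum]
          exact Finset.sum_congr rfl fun b _ => conj_ee _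
        rw [hg, h2]
        rw [Finset.sum_mul_sum]
        rw [Fintype.sum_prod_type]
        apply Finset.sum_congr rfl
        intro a _
        apply Finset.sum_congr rfl
        intro b _
        rw [← ee_add]
        congr 1
        simp only [hcz]
        push_cast
        ring
      calc ((q t : ℝ) : ℂ) = ∏ i, ((‖g i t‖^2 : ℝ) : ℂ) := by rw [hqdef]; push_cast; rfl
        _ = ∏ i, ∑ ab : Fin N × Fin N, ee ((cz ab : ℝ) * (lam i * t + θ i)) :=
            Finset.prod_congr rfl fun i _ => hfac i
        _ = ∑ d ∈ Fintype.piFinset (fun _ : Fin n => (Finset.univ : Finset (Fin N × Fin N))),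
              ∏ i, ee ((cz (d i) : ℝ) * (lam i * t + θ i)) := Finset.prod_univ_sum _ _
        _ = ∑ d : Fin n → Fin N × Fin N, coeffP d * ee (μP d * t) := by
            rw [Fintype.piFinset_univ]
            apply Finset.sum_congr rfl
            intro d _
            rw [← ee_sum, harg d t, ee_add]
    have hfq_expand : ∀ t, f t * ((q t : ℝ) : ℂ) =
        ∑ k : Fin n × (Fin n → Fin N × Fin N), (B k.1 * coeffP k.2) * ee ((lam k.1 + μP k.2) * t) := by
      intro t
      rw [hq_expand t, hf]
      rw [Finset.sum_mul_sum]
      rw [Fintype.sum_prod_type]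
      apply Finset.sum_congr rfl
      intro j _
      apply Finset.sum_congr rfl
      intro d _
      rw [show (lam j + μP d) * t = lam j * t + μP d * t by ring, ee_add]
      ring
    have hind : ∀ c : Fin n → ℤ, (∑ i, (c i : ℝ) * lam i) = 0 → ∀ i, c i = 0 := by
      rw [Fintype.linearIndependent_iff] at hlam
      intro c hc i
      have h2 : ∑ i, ((c i : ℚ)) • lam i = 0 := by
        have h3 : ∑ i, ((c i : ℚ)) • lam i = ∑ i, (c i : ℝ) * lam i := by
          apply Finset.sum_congr rfl
          intro i _
          rw [Rat.smul_def]
          norm_num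
        rw [h3, hc]
      exact_mod_cast hlam (fun i => (c i : ℚ)) h2 i
    have hcz0 : ∀ ab : Fin N × Fin N, cz ab = 0 ↔ ab.1 = ab.2 := by
      intro ab
      simp only [hcz]
      constructor
      · intro h
        have : (ab.1 : ℤ) = (ab.2 : ℤ) := by omega
        exact Fin.ext (by exact_mod_cast this)
      · intro h; rw [h]; ring
    have hcount0 : (∑ ab : Fin N × Fin N, if ab.1 = ab.2 then (1:ℂ) else 0) = (N:ℂ) := by
      rw [Fintype.sum_prod_type]
      have : ∀ a : Fin N, (∑ b : Fin N, if a = b then (1:ℂ) else 0) = 1 := by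
        intro a
        rw [Finset.sum_ite_eq]
        simp
      calc (∑ a : Fin N, ∑ b : Fin N, if a = b then (1:ℂ) else 0) = ∑ a : Fin N, 1 :=
            Finset.sum_congr rfl fun a _ => this a
        _ = (N:ℂ) := by simp
    have hValQ : (∑ d : Fin n → Fin N × Fin N, if μP d = 0 then coeffP d else 0) = (N:ℂ)^n := by
      have hcond : ∀ d : Fin n → Fin N × Fin N, μP d = 0 ↔ ∀ i, (d i).1 = (d i).2 := by
        intro d
        constructor
        · intro h i
          have h2 := hind (fun i => cz (d i)) h i
          exact (hcz0 (d i)).1 h2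
        · intro h
          simp only [hμP]
          apply Finset.sum_eq_zero
          intro i _
          rw [(hcz0 (d i)).2 (h i)]
          norm_num
      have hterm : ∀ d : Fin n → Fin N × Fin N,
          (if μP d = 0 then coeffP d else 0) = ∏ i, (if (d i).1 = (d i).2 then (1:ℂ) else 0) := by
        intro d
        by_cases hd : ∀ i, (d i).1 = (d i).2
        · rw [if_pos ((hcond d).2 hd)]
          have hc : coeffP d = 1 := by
            simp only [hcoeffP]
            have : (∑ i, (cz (d i) : ℝ) * θ i) = 0 := by
              apply Finset.sum_eq_zero
              intro i _
              rw [(hcz0 (d i)).2 (hd i)]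
              norm_num
            rw [this, ee_zero]
          rw [hc]
          rw [Finset.prod_congr rfl fun i _ => if_pos (hd i), Finset.prod_const_one]
        · rw [if_neg (fun h => hd ((hcond d).1 h))]
          push_neg at hd
          obtain ⟨i0, hi0⟩ := hd
          exact (Finset.prod_eq_zero (Finset.mem_univ i0)
            (if_neg hi0 : (if (d i0).1 = (d i0).2 then (1:ℂ) else 0) = 0)).symm
      calc (∑ d : Fin n → Fin N × Fin N, if μP d = 0 then coeffP d else 0)
          = ∑ d : Fin n → Fin N × Fin N, ∏ i, (if (d i).1 = (d i).2 then (1:ℂ) else 0) :=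
            Finset.sum_congr rfl fun d _ => hterm d
        _ = ∏ i : Fin n, ∑ ab : Fin N × Fin N, (if ab.1 = ab.2 then (1:ℂ) else 0) := by
            rw [Finset.prod_univ_sum, Fintype.piFinset_univ]
        _ = (N:ℂ)^n := by
            rw [Finset.prod_congr rfl fun i _ => hcount0, Finset.prod_const]
            simp
    have hValFP : (∑ k : Fin n × (Fin n → Fin N × Fin N),
        if lam k.1 + μP k.2 = 0 then B k.1 * coeffP k.2 else 0)
        = ((((N:ℝ) - 1) * (N:ℝ)^(n-1) * S : ℝ) : ℂ) := by
      have hcount1 : (∑ ab : Fin N × Fin N, if cz ab = -1 then (1:ℂ) else 0) = (N:ℂ) - 1 := by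
        rw [Finset.sum_boole]
        have hcard : (Finset.univ.filter fun ab : Fin N × Fin N => cz ab = -1).card = N - 1 := by
          have h := Finset.card_nbij'
            (s := Finset.univ.filter fun ab : Fin N × Fin N => cz ab = -1)
            (t := Finset.range (N-1)) (fun ab => (ab.1 : ℕ))
            (fun m => if h : m < N - 1 then (⟨m, by omega⟩, ⟨m+1, by omega⟩)
              else (⟨0, by omega⟩, ⟨0, by omega⟩)) ?_ ?_ ?_ ?_
          · rw [h, Finset.card_range]
          · intro ab hab
            simp only [Finset.mem_coe, Finset.mem_filter, Finset.mem_univ, true_and, hcz] at hab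
            simp only [Finset.mem_coe, Finset.mem_range]
            have h1 := ab.1.isLt
            have h2 := ab.2.isLt
            omega
          · intro m hm
            simp only [Finset.mem_coe, Finset.mem_range] at hm
            simp only [Finset.mem_coe, Finset.mem_filter, Finset.mem_univ, true_and, dif_pos hm, hcz]
            push_cast
            omega
          · intro ab hab
            simp only [Finset.mem_coe, Finset.mem_filter, Finset.mem_univ, true_and, hcz] at hab
            have h1 := ab.1.isLt
            have h2 := ab.2.isLt
            have hlt : (ab.1 : ℕ) < N - 1 := by omega
            simp only [dif_pos hlt]
            ext <;> simp <;> omega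
          · intro m hm
            simp only [Finset.mem_coe, Finset.mem_range] at hm
            simp only [dif_pos hm]
        rw [hcard]
        rw [Nat.cast_sub hN]
        norm_num
      have hcondj : ∀ (j : Fin n) (d : Fin n → Fin N × Fin N),
          lam j + μP d = 0 ↔ ∀ i, cz (d i) = (if i = j then -1 else 0) := by
        intro j d
        constructor
        · intro h
          have key2 : ∀ i : Fin n, ((cz (d i) + if i = j then 1 else 0 : ℤ) : ℝ)
              = (cz (d i) : ℝ) + (if i = j then (1:ℝ) else 0) := by
            intro i; by_cases hij : i = j <;> simp [hij]
          have h2 : (∑ i, ((cz (d i) + if i = j then 1 else 0 : ℤ) : ℝ) * lam i) = 0 := by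
            have he : (∑ i, ((cz (d i) + if i = j then 1 else 0 : ℤ) : ℝ) * lam i)
                = μP d + lam j := by
              simp only [key2, add_mul, Finset.sum_add_distrib, hμP]
              congr 1
              simp only [ite_mul, one_mul, zero_mul]
              rw [Finset.sum_ite_eq' Finset.univ j lam]
              simp
            rw [he]
            linarith
          intro i
          have h3 : cz (d i) + (if i = j then 1 else 0) = 0 := hind _ h2 i
          by_cases hij : i = j
          · subst hij
            rw [if_pos rfl] at h3 ⊢
            omega
          · rw [if_neg hij] at h3 ⊢
            omega
        · intro h
          simp only [hμP]
          have he : ∀ i : Fin n, ((cz (d i) : ℝ)) * lam i = (if i = j then (-1:ℝ) else 0) * lam i := by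
            intro i
            rw [h i]
            by_cases hij : i = j <;> simp [hij]
          rw [Finset.sum_congr rfl fun i _ => he i]
          simp only [ite_mul, neg_mul, one_mul, zero_mul]
          rw [Finset.sum_ite_eq' Finset.univ j (fun i => -lam i)]
          simp
      have hterm : ∀ (j : Fin n) (d : Fin n → Fin N × Fin N),
          (if lam j + μP d = 0 then B j * coeffP d else 0)
          = B j * ∏ i, (if cz (d i) = (if i = j then -1 else 0)
              then ee ((cz (d i) : ℝ) * θ i) else 0) := by
        intro j d
        by_cases hd : ∀ i, cz (d i) = (if i = j then -1 else 0)
        · rw [if_pos ((hcondj j d).2 hd)]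
          congr 1
          simp only [hcoeffP]
          rw [ee_sum]
          exact Finset.prod_congr rfl fun i _ => (if_pos (hd i)).symm
        · rw [if_neg (fun hh => hd ((hcondj j d).1 hh))]
          push_neg at hd
          obtain ⟨i0, hi0⟩ := hd
          rw [Finset.prod_eq_zero (Finset.mem_univ i0)
            (if_neg hi0 : (if cz (d i0) = (if i0 = j then -1 else 0)
              then ee ((cz (d i0) : ℝ) * θ i0) else 0) = 0), mul_zero]
      have hinner : ∀ j : Fin n, (∑ d : Fin n → Fin N × Fin N,
          ∏ i, (if cz (d i) = (if i = j then -1 else 0) then ee ((cz (d i):ℝ) * θ i) else 0))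
          = ee (-(θ j)) * (((N:ℂ) - 1) * (N:ℂ)^(n-1)) := by
        intro j
        have hps := Finset.prod_univ_sum (fun _ : Fin n => (Finset.univ : Finset (Fin N × Fin N)))
          (fun i ab => if cz ab = (if i = j then -1 else 0) then ee ((cz ab : ℝ) * θ i) else 0)
        rw [Fintype.piFinset_univ] at hps
        rw [← hps]
        rw [← Finset.mul_prod_erase Finset.univ _ (Finset.mem_univ j)]
        have hj : (∑ ab : Fin N × Fin N, if cz ab = (if j = j then -1 else 0)
            then ee ((cz ab:ℝ) * θ j) else 0) = ee (-(θ j)) * ((N:ℂ) - 1) := by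
          simp only [↓reduceIte]
          have he : ∀ ab : Fin N × Fin N, (if cz ab = -1 then ee ((cz ab:ℝ) * θ j) else 0)
              = ee (-(θ j)) * (if cz ab = -1 then (1:ℂ) else 0) := by
            intro ab
            by_cases hab : cz ab = -1
            · rw [if_pos hab, if_pos hab, hab, mul_one]
              norm_num
            · rw [if_neg hab, if_neg hab, mul_zero]
          rw [Finset.sum_congr rfl fun ab _ => he ab, ← Finset.mul_sum, hcount1]
        have hoff : ∀ i ∈ Finset.univ.erase j, (∑ ab : Fin N × Fin N,
            if cz ab = (if i = j then -1 else 0) then ee ((cz ab:ℝ) * θ i) else 0) = (N:ℂ) := by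
          intro i hi
          have hij : i ≠ j := Finset.ne_of_mem_erase hi
          simp only [if_neg hij]
          have he : ∀ ab : Fin N × Fin N, (if cz ab = 0 then ee ((cz ab:ℝ) * θ i) else 0)
              = (if ab.1 = ab.2 then (1:ℂ) else 0) := by
            intro ab
            by_cases hab : cz ab = 0
            · rw [if_pos hab, if_pos ((hcz0 ab).1 hab), hab]
              norm_num [ee_zero]
            · rw [if_neg hab, if_neg (fun hh => hab ((hcz0 ab).2 hh))]
          rw [Finset.sum_congr rfl fun ab _ => he ab, hcount0]
        rw [hj, Finset.prod_congr rfl hoff, Finset.prod_const]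
        rw [Finset.card_erase_of_mem (Finset.mem_univ j), Finset.card_univ, Fintype.card_fin]
        ring
      calc (∑ k : Fin n × (Fin n → Fin N × Fin N),
              if lam k.1 + μP k.2 = 0 then B k.1 * coeffP k.2 else 0)
          = ∑ j : Fin n, ∑ d : Fin n → Fin N × Fin N,
              (if lam j + μP d = 0 then B j * coeffP d else 0) := Fintype.sum_prod_type _
        _ = ∑ j : Fin n, B j * (ee (-(θ j)) * (((N:ℂ) - 1) * (N:ℂ)^(n-1))) := by
            apply Finset.sum_congr rfl
            intro j _
            rw [Finset.sum_congr rfl fun d _ => hterm j d, ← Finset.mul_sum, hinner j]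
        _ = ∑ j : Fin n, ((‖B j‖ : ℂ)) * (((N:ℂ) - 1) * (N:ℂ)^(n-1)) := by
            apply Finset.sum_congr rfl
            intro j _
            rw [← mul_assoc, hBθ j]
        _ = ((((N:ℝ) - 1) * (N:ℝ)^(n-1) * S : ℝ) : ℂ) := by
            rw [← Finset.sum_mul, hS]
            push_cast
            ring
    have h1 := tendsto_avg_sum (fun k : Fin n × (Fin n → Fin N × Fin N) => B k.1 * coeffP k.2)
      (fun k => lam k.1 + μP k.2)
    have h2 := tendsto_avg_sum coeffP μP
    rw [hValFP] at h1
    rw [hValQ] at h2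
    have hle : ∀ᶠ T : ℝ in atTop,
        ‖(∫ t in (0:ℝ)..T, ∑ k : Fin n × (Fin n → Fin N × Fin N),
            (B k.1 * coeffP k.2) * ee ((lam k.1 + μP k.2) * t)) / (T : ℂ)‖ ≤
        M * ‖(∫ t in (0:ℝ)..T, ∑ d : Fin n → Fin N × Fin N, coeffP d * ee (μP d * t)) / (T : ℂ)‖ := by
      filter_upwards [eventually_ge_atTop (1:ℝ)] with T hT
      have hT0 : (0:ℝ) < T := by linarith
      have hT0' : (0:ℝ) ≤ T := le_of_lt hT0
      have hfq_int_eq : (∫ t in (0:ℝ)..T, ∑ k : Fin n × (Fin n → Fin N × Fin N),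
          (B k.1 * coeffP k.2) * ee ((lam k.1 + μP k.2) * t))
          = ∫ t in (0:ℝ)..T, f t * ((q t : ℝ) : ℂ) := by
        apply intervalIntegral.integral_congr
        intro t _
        exact (hfq_expand t).symm
      have hq_int_eq : (∫ t in (0:ℝ)..T, ∑ d : Fin n → Fin N × Fin N, coeffP d * ee (μP d * t))
          = ∫ t in (0:ℝ)..T, ((q t : ℝ) : ℂ) := by
        apply intervalIntegral.integral_congr
        intro t _
        exact (hq_expand t).symm
      rw [hfq_int_eq, hq_int_eq]
      have hqre : (∫ t in (0:ℝ)..T, ((q t : ℝ) : ℂ)) = ((∫ t in (0:ℝ)..T, q t : ℝ) : ℂ) :=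
        intervalIntegral.integral_ofReal
      have hqint_nonneg : 0 ≤ ∫ t in (0:ℝ)..T, q t :=
        intervalIntegral.integral_nonneg hT0' (fun u _ => hq0 u)
      rw [hqre, norm_div, norm_div]
      have hTn : ‖(T:ℂ)‖ = T := by
        simp [_root_.abs_of_pos hT0]
      rw [hTn, Complex.norm_real, Real.norm_eq_abs, _root_.abs_of_nonneg hqint_nonneg]
      have h5 : ‖∫ t in (0:ℝ)..T, f t * ((q t : ℝ) : ℂ)‖ ≤ M * ∫ t in (0:ℝ)..T, q t := by
        calc ‖∫ t in (0:ℝ)..T, f t * ((q t : ℝ) : ℂ)‖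
            ≤ ∫ t in (0:ℝ)..T, ‖f t * ((q t : ℝ) : ℂ)‖ :=
              intervalIntegral.norm_integral_le_integral_norm hT0'
          _ = ∫ t in (0:ℝ)..T, ‖f t‖ * q t := by
              apply intervalIntegral.integral_congr
              intro u _
              show ‖f u * ((q u : ℝ) : ℂ)‖ = ‖f u‖ * q u
              rw [norm_mul, Complex.norm_real, Real.norm_eq_abs, _root_.abs_of_nonneg (hq0 u)]
          _ ≤ ∫ t in (0:ℝ)..T, M * q t := by
              apply intervalIntegral.integral_mono_on hT0'
              · exact (hf_cont.norm.mul hq_cont).intervalIntegrable _ _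
              · exact (continuous_const.mul hq_cont).intervalIntegrable _ _
              · exact fun u _ => mul_le_mul_of_nonneg_right (hM u) (hq0 u)
          _ = M * ∫ t in (0:ℝ)..T, q t := intervalIntegral.integral_const_mul _ _
      rw [← mul_div_assoc]
      gcongr
    have hfin : ‖((((N:ℝ) - 1) * (N:ℝ)^(n-1) * S : ℝ) : ℂ)‖ ≤ M * ‖((N:ℂ))^n‖ :=
      le_of_tendsto_of_tendsto h1.norm ((h2.norm).const_mul M) hle
    have e1 : ‖((((N:ℝ) - 1) * (N:ℝ)^(n-1) * S : ℝ) : ℂ)‖ = ((N:ℝ) - 1) * (N:ℝ)^(n-1) * S := by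
      rw [Complex.norm_real]
      apply _root_.abs_of_nonneg
      have h1 : (1:ℝ) ≤ (N:ℝ) := by exact_mod_cast hN
      have h2 : (0:ℝ) ≤ (N:ℝ) - 1 := by linarith
      have h3 : (0:ℝ) ≤ (N:ℝ)^(n-1) := by positivity
      exact mul_nonneg (mul_nonneg h2 h3) hS0
    have e2 : ‖((N:ℂ))^n‖ = (N:ℝ)^n := by
      rw [norm_pow]
      norm_num
    rw [e1, e2] at hfin
    exact hfin
  rcases Nat.eq_zero_or_pos n with hn | hn
  · have hSz : S = 0 := by rw [hS]; subst hn; simp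
    rw [hSz]
    exact hM0
  · refine le_of_forall_pos_le_add fun ε hε => ?_
    obtain ⟨N₀, hN₀⟩ := exists_nat_gt (S / ε)
    set Nn := N₀ + 1 with hNn
    have hN1 : 1 ≤ Nn := Nat.le_add_left 1 N₀
    have hkey := key Nn hN1
    have hNpos : (0:ℝ) < (Nn:ℝ) := by exact_mod_cast Nat.succ_pos N₀
    have hP : (0:ℝ) < (Nn:ℝ)^(n-1) := pow_pos hNpos _
    have hpow : ((Nn:ℝ))^n = ((Nn:ℝ))^(n-1) * (Nn:ℝ) := by
      conv_lhs => rw [show n = (n-1)+1 by omega]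
      rw [pow_succ]
    rw [hpow] at hkey
    have h4 : ((Nn:ℝ) - 1) * S ≤ M * (Nn:ℝ) := by
      have h5 : (((Nn:ℝ) - 1) * S) * ((Nn:ℝ))^(n-1) ≤ (M * (Nn:ℝ)) * ((Nn:ℝ))^(n-1) := by
        calc (((Nn:ℝ) - 1) * S) * ((Nn:ℝ))^(n-1) = ((Nn:ℝ) - 1) * ((Nn:ℝ))^(n-1) * S := by ring
          _ ≤ M * (((Nn:ℝ))^(n-1) * (Nn:ℝ)) := hkey
          _ = (M * (Nn:ℝ)) * ((Nn:ℝ))^(n-1) := by ring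
      exact le_of_mul_le_mul_right h5 hP
    have hSN : S < ε * (Nn:ℝ) := by
      have h6 : S / ε < (Nn:ℝ) := by
        calc S / ε < (N₀:ℝ) := hN₀
          _ < (Nn:ℝ) := by exact_mod_cast Nat.lt_succ_self N₀
      calc S = (S / ε) * ε := by field_simp
        _ < (Nn:ℝ) * ε := by exact mul_lt_mul_of_pos_right h6 hε
        _ = ε * (Nn:ℝ) := by ring
    nlinarith [h4, hSN, hNpos, hM0, hS0]

/-- for rationally independent exponents,
sup_t |Σ A_j e^{iλ_j t}(e^{ix_j} - e^{iy_j})| = Σ |A_j| |e^{ix_j} - e^{iy_j}|. -/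
theorem sup_trig_poly_eq_sum (n : ℕ) (A : Fin n → ℂ) (hA : ∀ j, A j ≠ 0)
    (lam : Fin n → ℝ) (hlam : LinearIndependent ℚ lam) (x y : Fin n → ℝ) :
    (⨆ t : ℝ, ‖∑ j, A j * Complex.exp (Complex.I * ((lam j * t : ℝ) : ℂ)) *
        (Complex.exp (Complex.I * (x j : ℂ)) - Complex.exp (Complex.I * (y j : ℂ)))‖) =
      ∑ j, ‖A j‖ *
        ‖Complex.exp (Complex.I * (x j : ℂ)) - Complex.exp (Complex.I * (y j : ℂ))‖ := by
  have hrw : ∀ t : ℝ, (∑ j, A j * Complex.exp (Complex.I * ((lam j * t : ℝ) : ℂ)) *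
      (Complex.exp (Complex.I * (x j : ℂ)) - Complex.exp (Complex.I * (y j : ℂ))))
      = ∑ j, (A j * (Complex.exp (Complex.I * (x j : ℂ)) -
          Complex.exp (Complex.I * (y j : ℂ)))) * ee (lam j * t) := by
    intro t
    apply Finset.sum_congr rfl
    intro j _
    rw [ee]
    ring
  calc (⨆ t : ℝ, ‖∑ j, A j * Complex.exp (Complex.I * ((lam j * t : ℝ) : ℂ)) *
        (Complex.exp (Complex.I * (x j : ℂ)) - Complex.exp (Complex.I * (y j : ℂ)))‖)
      = ⨆ t : ℝ, ‖∑ j, (A j * (Complex.exp (Complex.I * (x j : ℂ)) -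
          Complex.exp (Complex.I * (y j : ℂ)))) * ee (lam j * t)‖ := by
        exact iSup_congr fun t => by rw [hrw t]
    _ = ∑ j, ‖A j * (Complex.exp (Complex.I * (x j : ℂ)) -
          Complex.exp (Complex.I * (y j : ℂ)))‖ := sup_key n lam hlam _
    _ = ∑ j, ‖A j‖ * ‖Complex.exp (Complex.I * (x j : ℂ)) -
          Complex.exp (Complex.I * (y j : ℂ))‖ := by
        simp [norm_mul]
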